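/- Let X be a locally compact and locally path connected metric space and let G be a countable discrete group acting by homeomorphisms on X such that the orbit space X/G is metrizable. Then there exists a family {V_x}_{x∈X} of open subsets of X with x ∈ V_x for every x, satisfying: (A) V_{gx} = gV_x for every x ∈ X and g ∈ G; (B) if V_x ∩ V_{gx} ≠ ∅ then g ∈ G_x; (C) for every x ∈ X, every y ∈ V_x and every g ∈ G, if V_y ∩ V_{gx} ≠ ∅ then g ∈ G_x. -/

import Mathlib

open Pointwise Metric Set

set_option linter.unusedSectionVars false

section Aux

variable {G X : Type*} [Group G] [Countable G] [MetricSpace X]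
    [LocallyCompactSpace X] [LocallyPathConnectedSpace X]
    [MulAction G X] [ContinuousConstSMul G X]
    [TopologicalSpace.MetrizableSpace (Quotient (MulAction.orbitRel G X))]

local notation "Q" => Quotient (MulAction.orbitRel G X)

noncomputable local instance mQ : MetricSpace (Quotient (MulAction.orbitRel G X)) :=
  TopologicalSpace.metrizableSpaceMetric _

variable (G) in
/-- quotient map -/
def pq : X → Quotient (MulAction.orbitRel G X) := Quotient.mk _

lemma pq_smul (g : G) (z : X) : pq G (g • z) = pq G z :=
  Quotient.sound (MulAction.mem_orbit z g)

lemma exists_smul_eq_of_pq_eq {z w : X} (h : pq G z = pq G w) : ∃ g : G, g • w = z := by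
  have := Quotient.exact h
  exact MulAction.mem_orbit_iff.mp (MulAction.orbitRel_apply.mp this)

lemma continuous_pq : Continuous (pq G (X := X)) := continuous_quot_mk

lemma isOpenMap_pq : IsOpenMap (pq G (X := X)) :=
  MulAction.isOpenQuotientMap_quotientMk.isOpenMap

lemma smul_preimage_pq (g : G) (A : Set Q) : g • (pq G ⁻¹' A) = pq G ⁻¹' A := by
  ext u
  rw [Set.mem_smul_set_iff_inv_smul_mem]
  simp only [Set.mem_preimage, pq_smul]

lemma smul_connCompIn (g : G) (F : Set X) (z : X) :
    g • connectedComponentIn F z = connectedComponentIn (g • F) (g • z) := by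
  by_cases hz : z ∈ F
  · have := (Homeomorph.smul g (α := X)).image_connectedComponentIn (s := F) hz
    simpa [Set.image_smul] using this
  · have h1 : connectedComponentIn F z = ∅ := connectedComponentIn_eq_empty hz
    have h2 : g • z ∉ g • F := by
      simp only [Set.smul_mem_smul_set_iff]; exact hz
    rw [h1, connectedComponentIn_eq_empty h2, Set.smul_set_empty]

lemma preimage_image_pq (U : Set X) : pq G ⁻¹' (pq G '' U) = ⋃ g : G, g • U := by
  ext z
  simp only [Set.mem_preimage, Set.mem_image, Set.mem_iUnion]
  constructor
  · rintro ⟨u, hu, huz⟩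
    obtain ⟨g, hg⟩ := exists_smul_eq_of_pq_eq huz.symm
    exact ⟨g, u, hu, hg⟩
  · rintro ⟨g, u, hu, hg⟩
    exact ⟨u, hu, by rw [← hg, pq_smul]⟩

/-- A preconnected set reaching inside and outside a sphere meets the sphere. -/
lemma exists_dist_eq_of_preconnected {A : Set X} (hA : IsPreconnected A) {x : X} {r : ℝ}
    {a b : X} (ha : a ∈ A) (hda : dist a x < r) (hb : b ∈ A) (hdb : r < dist b x) :
    ∃ w ∈ A, dist w x = r := by
  by_contra hno
  push_neg at hno
  have hc : Continuous fun y : X => dist y x := by fun_prop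
  have ho1 : IsOpen {y : X | dist y x < r} := isOpen_lt hc continuous_const
  have ho2 : IsOpen {y : X | r < dist y x} := isOpen_lt continuous_const hc
  have h := hA {y | dist y x < r} {y | r < dist y x} ho1 ho2
    (fun y hy => by
      rcases lt_trichotomy (dist y x) r with h | h | h
      · exact Or.inl h
      · exact absurd h (hno y hy)
      · exact Or.inr h)
    ⟨a, ha, hda⟩ ⟨b, hb, hdb⟩
  obtain ⟨y, _, h1, h2⟩ := h
  simp only [Set.mem_setOf_eq] at h1 h2
  exact absurd (h1.trans h2) (lt_irrefl _)

lemma orbit_eq_preimage (x : X) : MulAction.orbit G x = pq G ⁻¹' {pq G x} := by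
  ext z
  simp only [Set.mem_preimage, Set.mem_singleton_iff]
  constructor
  · rintro ⟨g, rfl⟩
    exact pq_smul g x
  · intro h
    obtain ⟨g, hg⟩ := exists_smul_eq_of_pq_eq h
    exact ⟨g, hg⟩

lemma orbit_closed (x : X) : IsClosed (MulAction.orbit G x) := by
  rw [orbit_eq_preimage]
  exact isClosed_singleton.preimage continuous_pq

lemma exists_isolated (x : X) :
    ∃ ε > 0, IsCompact (closedBall x ε) ∧ (MulAction.orbit G x) ∩ closedBall x ε = {x} := by
  obtain ⟨K, hK, hKx⟩ := exists_compact_mem_nhds x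
  obtain ⟨ε₀, hε₀, hball⟩ := Metric.nhds_basis_closedBall.mem_iff.mp hKx
  set O := MulAction.orbit G x with hO
  have hOc : O.Countable := Set.countable_range _
  have hOcl : IsClosed O := orbit_closed x
  have hiso : ∃ η > 0, ∀ y ∈ O, dist y x < η → y = x := by
    by_contra hno
    push_neg at hno
    have hacc : ∀ η : ℝ, 0 < η → ∃ y ∈ O, dist y x < η ∧ y ≠ x := by
      intro η hη
      obtain ⟨y, hy, h1, h2⟩ := hno η hη
      exact ⟨y, hy, h1, h2⟩
    set C : Set X := O ∩ closedBall x ε₀ with hC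
    have hCcl : IsClosed C := hOcl.inter Metric.isClosed_closedBall
    have hCcpt : IsCompact C := hK.of_isClosed_subset hCcl fun z hz => hball hz.2
    haveI : CompactSpace C := isCompact_iff_compactSpace.mp hCcpt
    haveI : Countable ↥(O ∩ ball x ε₀) := (hOc.mono Set.inter_subset_left).to_subtype
    have hopen : ∀ y : ↥(O ∩ ball x ε₀), IsOpen {z : ↥C | (z : X) ≠ (y : X)} := by
      intro y
      have hcl : IsClosed {z : ↥C | (z : X) = (y : X)} :=
        (isClosed_singleton (x := (y : X))).preimage continuous_subtype_val
      have : {z : ↥C | (z : X) ≠ (y : X)} = {z : ↥C | (z : X) = (y : X)}ᶜ := rfl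
      rw [this]
      exact hcl.isOpen_compl
    have hdense : ∀ y : ↥(O ∩ ball x ε₀), Dense {z : ↥C | (z : X) ≠ (y : X)} := by
      intro y z
      rw [Metric.mem_closure_iff]
      intro ε hε
      by_cases hzy : (z : X) = (y : X)
      · obtain ⟨g, hg⟩ : ∃ g : G, g • x = (y : X) := y.2.1
        obtain ⟨η₀, hη₀, hball2⟩ := Metric.isOpen_iff.mp isOpen_ball (y : X) y.2.2
        have hcont : ContinuousAt (fun u : X => g • u) x :=
          (continuous_const_smul g).continuousAt
        rw [Metric.continuousAt_iff] at hcont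
        obtain ⟨δ, hδ, hδs⟩ := hcont (min ε η₀) (lt_min hε hη₀)
        obtain ⟨u, huO, hud, hune⟩ := hacc δ hδ
        have hgu : dist (g • u) (y : X) < min ε η₀ := by
          have := hδs hud
          rwa [hg] at this
        have hguO : g • u ∈ O := by
          obtain ⟨h, hh⟩ := huO
          exact ⟨g * h, by simp only [mul_smul]; rw [show h • x = u from hh]⟩
        have hguC : g • u ∈ C :=
          ⟨hguO, ball_subset_closedBall (hball2 (mem_ball.mpr (lt_of_lt_of_le hgu (min_le_right _ _))))⟩
        refine ⟨⟨g • u, hguC⟩, ?_, ?_⟩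
        · intro hbad
          simp only [Set.mem_setOf_eq, not_not] at hbad
          have : g • u = g • x := by rw [hg]; exact hbad
          exact hune (smul_left_cancel g this)
        · rw [Subtype.dist_eq, hzy, dist_comm]
          exact lt_of_lt_of_le hgu (min_le_left _ _)
      · exact ⟨z, hzy, by simpa using hε⟩
    have hd := dense_iInter_of_isOpen hopen hdense
    have hxC : x ∈ C := ⟨MulAction.mem_orbit_self x, mem_closedBall_self (le_of_lt hε₀)⟩
    have hx := hd ⟨x, hxC⟩
    rw [Metric.mem_closure_iff] at hx
    obtain ⟨z, hz, hzd⟩ := hx (ε₀ / 2) (by positivity)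
    have hz2 : (z : X) ∉ ball x ε₀ := by
      intro hmem
      have hmem2 : (⟨(z : X), z.2⟩ : ↥C) ∈ {w : ↥C | (w : X) ≠ ((⟨(z : X), ⟨z.2.1, hmem⟩⟩ : ↥(O ∩ ball x ε₀)) : X)} :=
        Set.mem_iInter.mp hz ⟨(z : X), ⟨z.2.1, hmem⟩⟩
      exact hmem2 rfl
    have hzd2 : dist (z : X) x < ε₀ / 2 := by
      rw [Subtype.dist_eq, dist_comm] at hzd
      exact hzd
    exact hz2 (mem_ball.mpr (by linarith))
  obtain ⟨η, hη, hηiso⟩ := hiso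
  refine ⟨min (η / 2) ε₀, by positivity, ?_, ?_⟩
  · exact hK.of_isClosed_subset Metric.isClosed_closedBall
      ((closedBall_subset_closedBall (min_le_right _ _)).trans hball)
  · apply Set.eq_singleton_iff_unique_mem.mpr
    refine ⟨⟨MulAction.mem_orbit_self x, mem_closedBall_self (by positivity)⟩, ?_⟩
    rintro y ⟨hyO, hyB⟩
    exact hηiso y hyO (lt_of_le_of_lt (mem_closedBall.mp hyB)
      (lt_of_le_of_lt (min_le_left _ _) (by linarith)))

lemma tendsto_of_dist_lt_one_div {Y : Type*} [PseudoMetricSpace Y] {f : ℕ → Y} {a : Y}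
    (h : ∀ n : ℕ, dist (f n) a < 1 / ((n : ℝ) + 1)) :
    Filter.Tendsto f Filter.atTop (nhds a) := by
  rw [tendsto_iff_dist_tendsto_zero]
  exact squeeze_zero (fun n => dist_nonneg) (fun n => le_of_lt (h n))
    tendsto_one_div_add_atTop_nhds_zero_nat

lemma no_sphere_accumulation {x : X} {r s : ℝ} (hs : 0 < s) (hsr : s ≤ 2 * r)
    (hcpt : IsCompact (closedBall x (2 * r)))
    (horb : MulAction.orbit G x ∩ closedBall x (2 * r) = {x})
    {w : ℕ → X} (hwd : ∀ n, dist (w n) x = s)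
    (hpq : Filter.Tendsto (fun n => pq G (w n)) Filter.atTop (nhds (pq G x))) : False := by
  have hmem : ∀ n, w n ∈ closedBall x (2 * r) := fun n => by
    rw [mem_closedBall, hwd]; linarith
  obtain ⟨a, haB, φ, hφ, hconv⟩ := hcpt.tendsto_subseq hmem
  have hda : dist a x = s := by
    have h1 : Filter.Tendsto (fun n => dist (w (φ n)) x) Filter.atTop (nhds (dist a x)) :=
      hconv.dist tendsto_const_nhds
    have h2 : (fun n => dist (w (φ n)) x) = fun _ => s := funext fun n => hwd (φ n)
    rw [h2] at h1
    exact (tendsto_nhds_unique tendsto_const_nhds h1).symm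
  have hpa : pq G a = pq G x := by
    have h1 : Filter.Tendsto (fun n => pq G (w (φ n))) Filter.atTop (nhds (pq G a)) :=
      (continuous_pq.tendsto a).comp hconv
    have h2 : Filter.Tendsto (fun n => pq G (w (φ n))) Filter.atTop (nhds (pq G x)) :=
      hpq.comp hφ.tendsto_atTop
    exact tendsto_nhds_unique h1 h2
  have hmem2 : a ∈ MulAction.orbit G x ∩ closedBall x (2 * r) := by
    refine ⟨?_, haB⟩
    obtain ⟨g, hg⟩ := exists_smul_eq_of_pq_eq hpa
    exact ⟨g, hg⟩
  rw [horb, Set.mem_singleton_iff] at hmem2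
  rw [hmem2, dist_self] at hda
  linarith

lemma exists_thinU (x : X) {r₁ : ℝ} (hr₁ : 0 < r₁)
    (hcpt : IsCompact (closedBall x (2 * r₁)))
    (horb : MulAction.orbit G x ∩ closedBall x (2 * r₁) = {x}) :
    ∃ U₀ : Set X, IsOpen U₀ ∧ x ∈ U₀ ∧ U₀ ⊆ ball x r₁ ∧
      ∀ g : G, ((g • U₀) ∩ U₀).Nonempty → g • x = x := by
  by_contra hno
  push_neg at hno
  have key : ∀ n : ℕ, ∃ w v : X, dist w x = r₁ ∧ pq G w = pq G v ∧
      dist v x < 1 / ((n : ℝ) + 1) := by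
    intro n
    have hmin : 0 < min r₁ (1 / ((n : ℝ) + 1)) := lt_min hr₁ (by positivity)
    set U := connectedComponentIn (ball x (min r₁ (1 / ((n : ℝ) + 1)))) x with hU
    have hUopen : IsOpen U := isOpen_ball.connectedComponentIn
    have hUx : x ∈ U := mem_connectedComponentIn (mem_ball_self hmin)
    have hUsub : U ⊆ ball x r₁ :=
      (connectedComponentIn_subset _ _).trans (ball_subset_ball (min_le_left _ _))
    obtain ⟨g, ⟨y, hy1, hy2⟩, hgx⟩ := hno U hUopen hUx hUsub
    have hApre : IsPreconnected (g • U) := by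
      rw [show g • U = (fun u => g • u) '' U from rfl]
      exact isPreconnected_connectedComponentIn.image _ (continuous_const_smul g).continuousOn
    have hgxA : g • x ∈ g • U := Set.smul_mem_smul_set hUx
    have hgxfar : r₁ < dist (g • x) x := by
      by_contra hle
      push_neg at hle
      have hmem : g • x ∈ MulAction.orbit G x ∩ closedBall x (2 * r₁) :=
        ⟨MulAction.mem_orbit _ _, mem_closedBall.mpr (by linarith)⟩
      rw [horb, Set.mem_singleton_iff] at hmem
      exact hgx hmem
    have hynear : dist y x < r₁ := mem_ball.mp (hUsub hy2)
    obtain ⟨w, hwA, hwd⟩ := exists_dist_eq_of_preconnected hApre hy1 hynear hgxA hgxfar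
    obtain ⟨v, hv, hvw⟩ := hwA
    refine ⟨w, v, hwd, ?_, ?_⟩
    · rw [← hvw, pq_smul]
    · exact lt_of_lt_of_le (mem_ball.mp (connectedComponentIn_subset _ _ hv)) (min_le_right _ _)
  choose w v hwd hwq hv using key
  refine no_sphere_accumulation hr₁ (by linarith) hcpt horb hwd ?_
  have hvx : Filter.Tendsto v Filter.atTop (nhds x) := tendsto_of_dist_lt_one_div hv
  have : Filter.Tendsto (fun n => pq G (v n)) Filter.atTop (nhds (pq G x)) :=
    (continuous_pq.tendsto x).comp hvx
  simpa only [hwq] using this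

lemma exists_shrink {x : X} {r₁ s₀ : ℝ} (h0 : 0 < s₀) (hs : s₀ ≤ r₁)
    (hcpt : IsCompact (closedBall x (2 * r₁)))
    (horb : MulAction.orbit G x ∩ closedBall x (2 * r₁) = {x}) :
    ∃ rs : ℝ, 0 < rs ∧ rs ≤ 1 ∧
      connectedComponentIn (pq G ⁻¹' Metric.ball (pq G x) rs) x ⊆ ball x s₀ := by
  by_contra hno
  push_neg at hno
  have key : ∀ n : ℕ, ∃ w : X, dist w x = s₀ / 2 ∧
      dist (pq G w) (pq G x) < 1 / ((n : ℝ) + 1) := by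
    intro n
    have hmin : 0 < min 1 (1 / ((n : ℝ) + 1)) := lt_min one_pos (by positivity)
    obtain ⟨u, huC, hufar⟩ := Set.not_subset.mp
      (hno (min 1 (1 / ((n : ℝ) + 1))) hmin (min_le_left _ _))
    have hxmem : x ∈ pq G ⁻¹' Metric.ball (pq G x) (min 1 (1 / ((n : ℝ) + 1))) := by
      simp only [Set.mem_preimage]
      exact mem_ball_self hmin
    obtain ⟨wpt, hwC, hwdist⟩ := exists_dist_eq_of_preconnected (r := s₀ / 2)
      (isPreconnected_connectedComponentIn) (mem_connectedComponentIn hxmem)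
      (by rw [dist_self]; positivity) huC
      (lt_of_lt_of_le (half_lt_self h0) (le_of_not_gt fun hlt => hufar (mem_ball.mpr hlt)))
    refine ⟨wpt, hwdist, ?_⟩
    have := connectedComponentIn_subset _ _ hwC
    simp only [Set.mem_preimage] at this
    exact lt_of_lt_of_le (mem_ball.mp this) (min_le_right _ _)
  choose w hwd hwq using key
  refine no_sphere_accumulation (by positivity : (0:ℝ) < s₀ / 2) (by linarith) hcpt horb hwd ?_
  exact tendsto_of_dist_lt_one_div hwq

lemma exists_localdata (x : X) :
    ∃ (U₀ : Set X) (D₀ rs : ℝ), IsOpen U₀ ∧ x ∈ U₀ ∧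
      0 < D₀ ∧ D₀ ≤ 1 ∧ 0 < rs ∧ rs ≤ 1 ∧
      (pq G ⁻¹' Metric.ball (pq G x) D₀ ⊆ ⋃ g : G, g • U₀) ∧
      (connectedComponentIn (pq G ⁻¹' Metric.ball (pq G x) rs) x ⊆ U₀) ∧
      (∀ g : G, ((g • U₀) ∩ U₀).Nonempty → g • x = x) := by
  obtain ⟨ε, hε, hcpt, horb⟩ := exists_isolated (G := G) x
  have h2 : ε = 2 * (ε / 2) := by ring
  rw [h2] at hcpt horb
  obtain ⟨U₀, hUo, hUx, hUsub, hthin⟩ := exists_thinU x (by positivity) hcpt horb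
  obtain ⟨s₀, hs₀, hs₀ball⟩ := Metric.isOpen_iff.mp hUo x hUx
  have hs₁pos : 0 < min s₀ (ε / 2) := lt_min hs₀ (by positivity)
  obtain ⟨rs, hrs, hrs1, hshrink⟩ := exists_shrink hs₁pos (min_le_right _ _) hcpt horb
  have himg : IsOpen (pq G '' U₀) := isOpenMap_pq U₀ hUo
  obtain ⟨D₁, hD₁, hD₁sub⟩ := Metric.isOpen_iff.mp himg (pq G x) ⟨x, hUx, rfl⟩
  refine ⟨U₀, min D₁ 1, rs, hUo, hUx, lt_min hD₁ one_pos, min_le_right _ _, hrs, hrs1,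
    ?_, ?_, hthin⟩
  · intro z hz
    rw [← preimage_image_pq]
    exact hD₁sub (mem_ball.mpr (lt_of_lt_of_le (mem_ball.mp hz) (min_le_left _ _)))
  · exact hshrink.trans ((ball_subset_ball (min_le_left _ _)).trans hs₀ball)

lemma smul_eq_of_mem_two {x : X} {U₀ : Set X}
    (hthin : ∀ g : G, ((g • U₀) ∩ U₀).Nonempty → g • x = x)
    {u : X} {m m' : G} (h1 : u ∈ m • U₀) (h2 : u ∈ m' • U₀) : m • x = m' • x := by
  obtain ⟨a, ha, hae⟩ := h1
  obtain ⟨b, hb, hbe⟩ := h2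
  have hae' : m • a = u := hae
  have hbe' : m' • b = u := hbe
  have hmem : (m'⁻¹ * m) • a ∈ ((m'⁻¹ * m) • U₀) ∩ U₀ := by
    refine ⟨Set.smul_mem_smul_set ha, ?_⟩
    have hab : (m'⁻¹ * m) • a = b := by
      rw [mul_smul, hae', ← hbe', ← mul_smul, inv_mul_cancel, one_smul]
    rw [hab]
    exact hb
  have hx := hthin (m'⁻¹ * m) ⟨_, hmem⟩
  calc m • x = m' • ((m'⁻¹ * m) • x) := by rw [← mul_smul]; congr 1; group
  _ = m' • x := by rw [hx]

lemma fiber_const {x : X} {U₀ : Set X} (hUo : IsOpen U₀)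
    (hthin : ∀ g : G, ((g • U₀) ∩ U₀).Nonempty → g • x = x)
    {A : Set X} (hA : IsPreconnected A) (hAsub : A ⊆ ⋃ g : G, g • U₀)
    {z : X} (hzA : z ∈ A) {k : G} (hzk : z ∈ k • U₀) :
    ∀ u ∈ A, ∀ m : G, u ∈ m • U₀ → m • x = k • x := by
  set S1 := ⋃ m : {m : G // m • x = k • x}, (m : G) • U₀ with hS1
  set S2 := ⋃ m : {m : G // m • x ≠ k • x}, (m : G) • U₀ with hS2
  have hS1o : IsOpen S1 := isOpen_iUnion fun m => hUo.smul _
  have hS2o : IsOpen S2 := isOpen_iUnion fun m => hUo.smul _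
  have hcover : A ⊆ S1 ∪ S2 := by
    intro u hu
    obtain ⟨t, ⟨m, rfl⟩, hm⟩ := hAsub hu
    by_cases hmx : m • x = k • x
    · exact Or.inl (Set.mem_iUnion.mpr ⟨⟨m, hmx⟩, hm⟩)
    · exact Or.inr (Set.mem_iUnion.mpr ⟨⟨m, hmx⟩, hm⟩)
  intro u hu m hum
  by_contra hne
  have hu2 : u ∈ S2 := Set.mem_iUnion.mpr ⟨⟨m, hne⟩, hum⟩
  have hz1 : z ∈ S1 := Set.mem_iUnion.mpr ⟨⟨k, rfl⟩, hzk⟩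
  obtain ⟨y, hyA, hy1, hy2⟩ := hA S1 S2 hS1o hS2o hcover ⟨z, hzA, hz1⟩ ⟨u, hu, hu2⟩
  obtain ⟨m1, hm1⟩ := Set.mem_iUnion.mp hy1
  obtain ⟨m2, hm2⟩ := Set.mem_iUnion.mp hy2
  exact m2.2 ((smul_eq_of_mem_two hthin hm2 hm1).trans m1.2)

variable (G) in
def thinQ (q : Quotient (MulAction.orbitRel G X)) (t : ℝ) : Prop :=
  ∀ z : X, pq G z = q → ∀ g : G,
    g • z ∈ connectedComponentIn (pq G ⁻¹' Metric.ball q t) z → g • z = z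

lemma thinQ_mono {q : Q} {t t' : ℝ} (h : t' ≤ t) (ht : thinQ G q t) : thinQ G q t' := by
  intro z hz g hg
  exact ht z hz g
    (connectedComponentIn_mono z (Set.preimage_mono (ball_subset_ball h)) hg)

variable (G) in
noncomputable def tauQ (q : Quotient (MulAction.orbitRel G X)) : ℝ :=
  sSup {t : ℝ | t ∈ Set.Ioc (0 : ℝ) 1 ∧ thinQ G q t}

lemma tauQ_bddAbove (q : Q) : BddAbove {t : ℝ | t ∈ Set.Ioc (0 : ℝ) 1 ∧ thinQ G q t} :=
  ⟨1, fun _ ht => ht.1.2⟩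

lemma thinQ_of_le_D₀ {x : X} {U₀ : Set X} {D₀ : ℝ} (hUx : x ∈ U₀) (hUo : IsOpen U₀)
    (hD₀sub : pq G ⁻¹' Metric.ball (pq G x) D₀ ⊆ ⋃ g : G, g • U₀)
    (hthin : ∀ g : G, ((g • U₀) ∩ U₀).Nonempty → g • x = x)
    {t : ℝ} (ht : t ≤ D₀) : thinQ G (pq G x) t := by
  intro z hz g hg
  obtain ⟨k, hk⟩ := exists_smul_eq_of_pq_eq hz
  set A := connectedComponentIn (pq G ⁻¹' Metric.ball (pq G x) t) z with hA
  have hAsub : A ⊆ ⋃ g : G, g • U₀ := (connectedComponentIn_subset _ _).trans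
    ((Set.preimage_mono (ball_subset_ball ht)).trans hD₀sub)
  have hzA : z ∈ A := by
    have hne : (connectedComponentIn (pq G ⁻¹' Metric.ball (pq G x) t) z).Nonempty :=
      ⟨_, hg⟩
    exact mem_connectedComponentIn (connectedComponentIn_nonempty_iff.mp hne)
  have hzk : z ∈ k • U₀ := by rw [← hk]; exact Set.smul_mem_smul_set hUx
  have hfc := fiber_const hUo hthin isPreconnected_connectedComponentIn hAsub hzA hzk
  have h1 : g • z ∈ (g * k) • U₀ := by
    rw [← hk, ← mul_smul]
    exact Set.smul_mem_smul_set hUx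
  have h2 := hfc (g • z) hg (g * k) h1
  calc g • z = (g * k) • x := by rw [mul_smul, hk]
  _ = k • x := h2
  _ = z := hk

lemma tauQ_pos (q : Q) : 0 < tauQ G q := by
  obtain ⟨U₀, D₀, rs, hUo, hUx, hD₀pos, hD₀le, _, _, hD₀sub, _, hthin⟩ :=
    exists_localdata (G := G) (Quotient.out q)
  have hout : pq G (Quotient.out q) = q := Quotient.out_eq q
  rw [hout] at hD₀sub
  have hthinD : thinQ G q D₀ := by
    have := thinQ_of_le_D₀ hUx hUo (by rw [hout]; exact hD₀sub) hthin (le_refl D₀)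
    rwa [hout] at this
  have : D₀ ∈ {t : ℝ | t ∈ Set.Ioc (0 : ℝ) 1 ∧ thinQ G q t} := ⟨⟨hD₀pos, hD₀le⟩, hthinD⟩
  exact lt_of_lt_of_le hD₀pos (le_csSup (tauQ_bddAbove q) this)

lemma tauQ_le_one (q : Q) : tauQ G q ≤ 1 := by
  apply csSup_le
  · obtain ⟨U₀, D₀, rs, hUo, hUx, hD₀pos, hD₀le, _, _, hD₀sub, _, hthin⟩ :=
      exists_localdata (G := G) (Quotient.out q)
    have hout : pq G (Quotient.out q) = q := Quotient.out_eq q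
    have hthinD : thinQ G q D₀ := by
      have := thinQ_of_le_D₀ hUx hUo hD₀sub hthin (le_refl D₀)
      rwa [hout] at this
    exact ⟨D₀, ⟨hD₀pos, hD₀le⟩, hthinD⟩
  · exact fun t ht => ht.1.2

lemma thinQ_of_lt_tau {q : Q} {t : ℝ} (h : t < tauQ G q) : thinQ G q t := by
  obtain ⟨t', ht', htt'⟩ := exists_lt_of_lt_csSup (by
    obtain ⟨U₀, D₀, rs, hUo, hUx, hD₀pos, hD₀le, _, _, hD₀sub, _, hthin⟩ :=
      exists_localdata (G := G) (Quotient.out q)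
    have hout : pq G (Quotient.out q) = q := Quotient.out_eq q
    have hthinD : thinQ G q D₀ := by
      have := thinQ_of_le_D₀ hUx hUo hD₀sub hthin (le_refl D₀)
      rwa [hout] at this
    exact ⟨D₀, ⟨hD₀pos, hD₀le⟩, hthinD⟩) h
  exact thinQ_mono (le_of_lt htt') ht'.2

lemma not_thinQ_of_gt {q : Q} {t : ℝ} (h1 : t ≤ 1) (h : tauQ G q < t) : ¬ thinQ G q t := by
  intro hthin
  have h0 : 0 < t := lt_trans (tauQ_pos q) h
  have : t ∈ {t : ℝ | t ∈ Set.Ioc (0 : ℝ) 1 ∧ thinQ G q t} := ⟨⟨h0, h1⟩, hthin⟩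
  exact absurd (le_csSup (tauQ_bddAbove q) this) (not_le.mpr h)

lemma connCompIn_smul (g : G) (F : Set (Quotient (MulAction.orbitRel G X))) (z : X) :
    g • connectedComponentIn (pq G ⁻¹' F) z = connectedComponentIn (pq G ⁻¹' F) (g • z) := by
  rw [smul_connCompIn, smul_preimage_pq]

lemma pq_image_smul (g : G) (A : Set X) : pq G '' (g • A) = pq G '' A := by
  ext q
  simp only [Set.mem_image]
  constructor
  · rintro ⟨u, ⟨a, ha, rfl⟩, hq⟩
    exact ⟨a, ha, by rw [← hq]; exact (pq_smul g a).symm⟩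
  · rintro ⟨a, ha, hq⟩
    exact ⟨g • a, Set.smul_mem_smul_set ha, by rw [pq_smul]; exact hq⟩

lemma exists_delta (b : Quotient (MulAction.orbitRel G X)) :
    ∃ δ : ℝ, 0 < δ ∧ ∀ (a : Quotient (MulAction.orbitRel G X)) (c : ℝ) (z' : X),
      0 < c → c ≤ tauQ G a → tauQ G a ≤ δ → pq G z' = a →
      b ∈ pq G '' connectedComponentIn (pq G ⁻¹' Metric.ball a (c / 100)) z' → False := by
  obtain ⟨U₀, D₀, rs, hUo, hUx, hD₀pos, hD₀le, hrspos, hrsle, hD₀sub, hshrink, hthin⟩ :=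
    exists_localdata (G := G) (Quotient.out b)
  set x := Quotient.out b with hxdef
  have hout : pq G x = b := Quotient.out_eq b
  refine ⟨min D₀ rs / 3, by positivity, ?_⟩
  intro a c z' hc0 hc1 hta hz' hb
  set δ := min D₀ rs / 3 with hδdef
  have hδD : 3 * δ ≤ D₀ := by
    have := min_le_left D₀ rs
    rw [hδdef]; linarith
  have hδr : 3 * δ ≤ rs := by
    have := min_le_right D₀ rs
    rw [hδdef]; linarith
  have hδ1 : 2 * δ ≤ 1 := by linarith [hrsle]
  have hδ0 : 0 < δ := by positivity
  have hc : c ≤ δ := le_trans hc1 hta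
  obtain ⟨w, hwC, hwb⟩ := hb
  have hρ : dist b a < c / 100 := by
    have hmem := connectedComponentIn_subset _ _ hwC
    rw [Set.mem_preimage, mem_ball] at hmem
    rw [← hwb]; exact hmem
  have hab : dist a b < c / 100 := by rw [dist_comm]; exact hρ
  obtain ⟨k, hk⟩ := exists_smul_eq_of_pq_eq (show pq G w = pq G x by rw [hwb, hout])
  set z₂ := k⁻¹ • z' with hz₂def
  have hz₂a : pq G z₂ = a := by rw [hz₂def, pq_smul]; exact hz'
  have hxC' : x ∈ connectedComponentIn (pq G ⁻¹' Metric.ball a (c / 100)) z₂ := by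
    have h1 : k⁻¹ • w ∈ k⁻¹ • connectedComponentIn (pq G ⁻¹' Metric.ball a (c / 100)) z' :=
      Set.smul_mem_smul_set hwC
    rw [connCompIn_smul] at h1
    have hkw : k⁻¹ • w = x := by rw [← hk, ← mul_smul, inv_mul_cancel, one_smul]
    rwa [hkw] at h1
  have hC'eq : connectedComponentIn (pq G ⁻¹' Metric.ball a (c / 100)) z₂
      = connectedComponentIn (pq G ⁻¹' Metric.ball a (c / 100)) x := connectedComponentIn_eq hxC'
  have hz₂C' : z₂ ∈ connectedComponentIn (pq G ⁻¹' Metric.ball a (c / 100)) z₂ :=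
    mem_connectedComponentIn (by rw [Set.mem_preimage, hz₂a]; exact mem_ball_self (by positivity))
  have hsub1 : Metric.ball a (c / 100) ⊆ Metric.ball b rs := by
    intro u hu
    rw [mem_ball] at hu ⊢
    have htri := dist_triangle u a b
    linarith
  have hsubU : connectedComponentIn (pq G ⁻¹' Metric.ball a (c / 100)) z₂ ⊆ U₀ := by
    rw [hC'eq]
    refine le_trans ?_ hshrink
    rw [hout]
    exact connectedComponentIn_mono x (Set.preimage_mono hsub1)
  have h2δtau : tauQ G a < 2 * δ := lt_of_le_of_lt hta (by linarith)
  have hnothin := not_thinQ_of_gt hδ1 h2δtau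
  unfold thinQ at hnothin
  push_neg at hnothin
  obtain ⟨z₁, hz₁a, g₁, hg₁mem, hg₁ne⟩ := hnothin
  obtain ⟨h, hh⟩ := exists_smul_eq_of_pq_eq (show pq G z₂ = pq G z₁ by rw [hz₂a, hz₁a])
  set g₂ := h * g₁ * h⁻¹ with hg₂def
  have hg₂z₂ : g₂ • z₂ = h • (g₁ • z₁) := by
    rw [← hh, hg₂def, ← mul_smul, ← mul_smul]
    congr 1
    group
  have hg₂mem : g₂ • z₂ ∈ connectedComponentIn (pq G ⁻¹' Metric.ball a (2 * δ)) z₂ := by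
    have h1 : h • (g₁ • z₁) ∈ h • connectedComponentIn (pq G ⁻¹' Metric.ball a (2 * δ)) z₁ :=
      Set.smul_mem_smul_set hg₁mem
    rw [connCompIn_smul, hh] at h1
    rwa [hg₂z₂]
  have hg₂ne : g₂ • z₂ ≠ z₂ := by
    rw [hg₂z₂, ← hh]
    intro hbad
    exact hg₁ne (smul_left_cancel h hbad)
  have hAsub : connectedComponentIn (pq G ⁻¹' Metric.ball a (2 * δ)) z₂ ⊆ ⋃ g : G, g • U₀ := by
    refine (connectedComponentIn_subset _ _).trans (le_trans ?_ hD₀sub)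
    rw [hout]
    refine Set.preimage_mono ?_
    intro u hu
    rw [mem_ball] at hu ⊢
    have htri := dist_triangle u a b
    linarith
  have hz₂A : z₂ ∈ connectedComponentIn (pq G ⁻¹' Metric.ball a (2 * δ)) z₂ :=
    mem_connectedComponentIn (by rw [Set.mem_preimage, hz₂a]; exact mem_ball_self (by positivity))
  have hz₂U : z₂ ∈ (1 : G) • U₀ := by rw [one_smul]; exact hsubU hz₂C'
  have hfc := fiber_const hUo hthin isPreconnected_connectedComponentIn hAsub hz₂A hz₂U
  have hg₂x : g₂ • x = x := by
    have h1 : g₂ • z₂ ∈ g₂ • U₀ := Set.smul_mem_smul_set (hsubU hz₂C')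
    have h2 := hfc (g₂ • z₂) hg₂mem g₂ h1
    rwa [one_smul] at h2
  have hEq : g₂ • connectedComponentIn (pq G ⁻¹' Metric.ball a (c / 100)) x
      = connectedComponentIn (pq G ⁻¹' Metric.ball a (c / 100)) x := by
    rw [connCompIn_smul, hg₂x]
  have hmemC' : g₂ • z₂ ∈ connectedComponentIn (pq G ⁻¹' Metric.ball a (c / 100)) z₂ := by
    rw [hC'eq, ← hEq]
    exact Set.smul_mem_smul_set (hC'eq ▸ hz₂C')
  have hthinc : thinQ G a (c / 100) := thinQ_of_lt_tau (lt_of_lt_of_le (by linarith) hc1)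
  exact hg₂ne (hthinc z₂ hz₂a g₂ hmemC')

variable (G) in
noncomputable def pullSet (e : Quotient (MulAction.orbitRel G X) → ℝ)
    (b : Quotient (MulAction.orbitRel G X)) : Set (Quotient (MulAction.orbitRel G X)) :=
  {a | b ∈ pq G '' connectedComponentIn (pq G ⁻¹' Metric.ball a (e a / 100)) (Quotient.out a)}

variable (G) in
noncomputable def cseq : ℕ → Quotient (MulAction.orbitRel G X) → ℝ
  | 0 => tauQ G
  | n + 1 => fun b => min (cseq n b) (sInf (tauQ G '' pullSet G (cseq n) b ∪ {1}))

lemma cseq_zero : cseq (G := G) (X := X) 0 = tauQ G := rfl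

lemma cseq_succ (n : ℕ) (b : Quotient (MulAction.orbitRel G X)) :
    cseq G (n + 1) b = min (cseq G n b) (sInf (tauQ G '' pullSet G (cseq G n) b ∪ {1})) := rfl

lemma cseq_bddBelow (n : ℕ) (b : Quotient (MulAction.orbitRel G X)) :
    BddBelow (tauQ G '' pullSet G (cseq G n) b ∪ {1}) := by
  refine ⟨0, ?_⟩
  rintro t (⟨a, _, rfl⟩ | rfl)
  · exact le_of_lt (tauQ_pos a)
  · exact zero_le_one

lemma cseq_le_tau (n : ℕ) (b : Quotient (MulAction.orbitRel G X)) :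
    cseq G n b ≤ tauQ G b := by
  induction n with
  | zero => exact le_refl _
  | succ n ih => exact le_trans (min_le_left _ _) ih

lemma cseq_antitone {n m : ℕ} (h : n ≤ m) (b : Quotient (MulAction.orbitRel G X)) :
    cseq G m b ≤ cseq G n b := by
  induction m with
  | zero => rw [Nat.le_zero.mp h]
  | succ m ih =>
    rcases Nat.lt_or_ge n (m + 1) with hlt | hge
    · exact le_trans (min_le_left _ _) (ih (Nat.lt_succ_iff.mp hlt))
    · rw [Nat.le_antisymm h hge]

lemma cseq_pull_le {n : ℕ} {a b : Quotient (MulAction.orbitRel G X)}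
    (ha : a ∈ pullSet G (cseq G n) b) : cseq G (n + 1) b ≤ tauQ G a :=
  le_trans (min_le_right _ _)
    (csInf_le (cseq_bddBelow n b) (Set.mem_union_left _ (Set.mem_image_of_mem _ ha)))

lemma cseq_lb (n : ℕ) (b : Quotient (MulAction.orbitRel G X)) :
    min (tauQ G b) (exists_delta (G := G) b).choose ≤ cseq G n b := by
  induction n generalizing b with
  | zero => exact min_le_left _ _
  | succ n ih =>
    rw [cseq_succ]
    refine le_min (ih b) ?_
    refine le_csInf ⟨1, Set.mem_union_right _ rfl⟩ ?_
    rintro t (⟨a, ha, rfl⟩ | rfl)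
    · by_contra hlt
      push_neg at hlt
      have hδa := (exists_delta (G := G) a).choose_spec.1
      have hcpos : 0 < cseq G n a :=
        lt_of_lt_of_le (lt_min (tauQ_pos a) hδa) (ih a)
      exact (exists_delta (G := G) b).choose_spec.2 a (cseq G n a) (Quotient.out a) hcpos
        (cseq_le_tau n a)
        (le_of_lt (lt_of_lt_of_le hlt (min_le_right _ _)))
        (Quotient.out_eq a) ha
    · exact le_trans (min_le_left _ _) (tauQ_le_one b)

variable (G) in
noncomputable def chat (b : Quotient (MulAction.orbitRel G X)) : ℝ := ⨅ n : ℕ, cseq G n b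

lemma chat_le (b : Quotient (MulAction.orbitRel G X)) (n : ℕ) : chat G b ≤ cseq G n b :=
  ciInf_le ⟨min (tauQ G b) (exists_delta (G := G) b).choose, by
    rintro t ⟨m, rfl⟩; exact cseq_lb m b⟩ n

lemma chat_pos (b : Quotient (MulAction.orbitRel G X)) : 0 < chat G b :=
  lt_of_lt_of_le (lt_min (tauQ_pos b) (exists_delta (G := G) b).choose_spec.1)
    (le_ciInf fun n => cseq_lb n b)

lemma chat_le_tau (b : Quotient (MulAction.orbitRel G X)) : chat G b ≤ tauQ G b :=
  chat_le b 0

lemma chat_key {b b' : Quotient (MulAction.orbitRel G X)} {z : X} (hz : pq G z = b)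
    (hpull : b' ∈ pq G '' connectedComponentIn
      (pq G ⁻¹' Metric.ball b (chat G b / 100)) z) :
    chat G b' ≤ tauQ G b := by
  have hmem : b ∈ pullSet G (cseq G 0) b' := by
    unfold pullSet
    have hsub : connectedComponentIn (pq G ⁻¹' Metric.ball b (chat G b / 100)) z ⊆
        connectedComponentIn (pq G ⁻¹' Metric.ball b (cseq G 0 b / 100)) z :=
      connectedComponentIn_mono z
        (Set.preimage_mono (ball_subset_ball (by linarith [chat_le b 0])))
    have h1 : b' ∈ pq G '' connectedComponentIn
        (pq G ⁻¹' Metric.ball b (cseq G 0 b / 100)) z :=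
      Set.image_mono hsub hpull
    obtain ⟨g, hg⟩ := exists_smul_eq_of_pq_eq
      (show pq G (Quotient.out b) = pq G z by rw [hz]; exact Quotient.out_eq b)
    rw [Set.mem_setOf_eq,
      show connectedComponentIn (pq G ⁻¹' Metric.ball b (cseq G 0 b / 100)) (Quotient.out b)
        = g • connectedComponentIn (pq G ⁻¹' Metric.ball b (cseq G 0 b / 100)) z by
          rw [connCompIn_smul, hg],
      pq_image_smul]
    exact h1
  exact le_trans (chat_le b' 1) (cseq_pull_le hmem)

end Aux

/-- For a countable discrete group acting on a locally compact, locally path connected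
metric space with metrizable orbit space, there is an equivariant family of open sets
`V_x ∋ x` satisfying (A), (B) and (C). -/
theorem stmt11 {G X : Type*} [Group G] [Countable G] [MetricSpace X]
    [LocallyCompactSpace X] [LocallyPathConnectedSpace X]
    [MulAction G X] [ContinuousConstSMul G X]
    [TopologicalSpace.MetrizableSpace (Quotient (MulAction.orbitRel G X))] :
    ∃ V : X → Set X,
      (∀ x : X, x ∈ V x) ∧
      (∀ x : X, IsOpen (V x)) ∧
      (∀ (x : X) (g : G), V (g • x) = g • V x) ∧
      (∀ (x : X) (g : G), (V x ∩ V (g • x)).Nonempty → g • x = x) ∧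
      (∀ (x : X) (g : G), ∀ y ∈ V x, (V y ∩ V (g • x)).Nonempty → g • x = x) := by
  classical
  letI : MetricSpace (Quotient (MulAction.orbitRel G X)) := mQ (G := G) (X := X)
  set e : Quotient (MulAction.orbitRel G X) → ℝ := fun q => chat G q / 100 with he
  have hepos : ∀ q, 0 < e q := fun q => by
    have := chat_pos (G := G) (X := X) q
    rw [he]
    positivity
  set V : X → Set X :=
    fun x => connectedComponentIn (pq G ⁻¹' Metric.ball (pq G x) (e (pq G x))) x with hV
  have hball : ∀ x : X, x ∈ pq G ⁻¹' Metric.ball (pq G x) (e (pq G x)) := fun x => by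
    simp only [Set.mem_preimage]
    exact Metric.mem_ball_self (hepos _)
  have hmemV : ∀ x, x ∈ V x := fun x => mem_connectedComponentIn (hball x)
  have hopenV : ∀ x, IsOpen (V x) := fun x =>
    (Metric.isOpen_ball.preimage continuous_pq).connectedComponentIn
  have hVgx : ∀ (x : X) (g : G), V (g • x)
      = connectedComponentIn (pq G ⁻¹' Metric.ball (pq G x) (e (pq G x))) (g • x) := by
    intro x g
    rw [hV]
    simp only [pq_smul]
  have hequiv : ∀ (x : X) (g : G), V (g • x) = g • V x := by
    intro x g
    rw [hVgx, hV]
    exact (connCompIn_smul g _ x).symm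
  have hthin : ∀ (x : X) (t : ℝ) (g : G), t < tauQ G (pq G x) →
      g • x ∈ connectedComponentIn (pq G ⁻¹' Metric.ball (pq G x) t) x → g • x = x := by
    intro x t g ht hmem
    exact thinQ_of_lt_tau ht x rfl g hmem
  have he_lt_tau : ∀ q, e q < tauQ G q := fun q => by
    have h1 := chat_le_tau (G := G) (X := X) q
    have h2 := chat_pos (G := G) (X := X) q
    rw [he]
    simp only
    linarith
  have hBgen : ∀ (x : X) (g : G), (V x ∩ V (g • x)).Nonempty → g • x ∈ V x := by
    rintro x g ⟨u, hu1, hu2⟩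
    rw [hVgx] at hu2
    rw [hV] at hu1
    simp only at hu1 hu2
    have h1 := connectedComponentIn_eq hu1
    have h2 := connectedComponentIn_eq hu2
    have h3 : connectedComponentIn (pq G ⁻¹' Metric.ball (pq G x) (e (pq G x))) x
        = connectedComponentIn (pq G ⁻¹' Metric.ball (pq G x) (e (pq G x))) (g • x) := by
      rw [h1, ← h2]
    rw [hV]
    simp only
    rw [h3]
    refine mem_connectedComponentIn ?_
    simp only [Set.mem_preimage, pq_smul]
    exact Metric.mem_ball_self (hepos _)
  have hB : ∀ (x : X) (g : G), (V x ∩ V (g • x)).Nonempty → g • x = x := by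
    intro x g h
    refine hthin x _ g (he_lt_tau _) ?_
    have := hBgen x g h
    rw [hV] at this
    exact this
  refine ⟨V, hmemV, hopenV, hequiv, hB, ?_⟩
  rintro x g y hy ⟨u, hu1, hu2⟩
  have hyF : y ∈ pq G ⁻¹' Metric.ball (pq G x) (e (pq G x)) := by
    have := connectedComponentIn_subset _ _ (show y ∈ _ from hy)
    exact this
  have hdyx : dist (pq G y) (pq G x) < e (pq G x) := by
    have := hyF
    rwa [Set.mem_preimage, Metric.mem_ball] at this
  have hkey : chat G (pq G y) ≤ tauQ G (pq G x) := by
    refine chat_key (z := x) rfl ⟨y, ?_, rfl⟩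
    have := hy
    rw [hV] at this
    exact this
  have hepy : e (pq G y) ≤ tauQ G (pq G x) / 100 := by
    rw [he]
    simp only
    linarith
  have hepx : e (pq G x) ≤ tauQ G (pq G x) / 100 := by
    have h1 := chat_le_tau (G := G) (X := X) (pq G x)
    rw [he]
    simp only
    linarith
  set sb : ℝ := max (e (pq G x)) (dist (pq G y) (pq G x) + e (pq G y)) with hsb
  have htaupos := tauQ_pos (G := G) (X := X) (pq G x)
  have hsb_lt : sb < tauQ G (pq G x) := by
    apply max_lt
    · linarith [hepos (pq G x)]
    · linarith [hepos (pq G y)]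
  have hsb_pos : 0 < sb := lt_of_lt_of_le (hepos (pq G x)) (le_max_left _ _)
  have hVxU : V x ⊆ connectedComponentIn (pq G ⁻¹' Metric.ball (pq G x) sb) x := by
    rw [hV]
    exact connectedComponentIn_mono x
      (Set.preimage_mono (Metric.ball_subset_ball (le_max_left _ _)))
  have hyU : y ∈ connectedComponentIn (pq G ⁻¹' Metric.ball (pq G x) sb) x := hVxU hy
  have hVyU : V y ⊆ connectedComponentIn (pq G ⁻¹' Metric.ball (pq G x) sb) x := by
    have hsub : (pq G ⁻¹' Metric.ball (pq G y) (e (pq G y)))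
        ⊆ pq G ⁻¹' Metric.ball (pq G x) sb := by
      intro v hv
      rw [Set.mem_preimage, Metric.mem_ball] at hv ⊢
      have htri := dist_triangle (pq G v) (pq G y) (pq G x)
      exact lt_of_lt_of_le (by linarith) (le_max_right _ _)
    have h1 : V y ⊆ connectedComponentIn (pq G ⁻¹' Metric.ball (pq G x) sb) y := by
      rw [hV]
      exact isPreconnected_connectedComponentIn.subset_connectedComponentIn
        (mem_connectedComponentIn (hball y))
        ((connectedComponentIn_subset _ _).trans hsub)
    rwa [← connectedComponentIn_eq hyU] at h1
  have hVgxU : V (g • x) ⊆ connectedComponentIn (pq G ⁻¹' Metric.ball (pq G x) sb) (g • x) := by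
    rw [hVgx]
    exact connectedComponentIn_mono _
      (Set.preimage_mono (Metric.ball_subset_ball (le_max_left _ _)))
  have h1 := connectedComponentIn_eq (hVyU hu1)
  have h2 := connectedComponentIn_eq (hVgxU hu2)
  have hgxmem : g • x ∈ connectedComponentIn (pq G ⁻¹' Metric.ball (pq G x) sb) x := by
    rw [h1, ← h2]
    refine mem_connectedComponentIn ?_
    simp only [Set.mem_preimage, pq_smul]
    exact Metric.mem_ball_self hsb_pos
  exact hthin x sb g hsb_lt hgxmem
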